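/- Let 𝑴 be a real symmetric positive definite M×M matrix with unique symmetric positive definite square root 𝑴^{1/2} and 𝑴^{−1/2} = (𝑴^{1/2})^{−1}. Let 𝒜 be a real symmetric positive semidefinite M×M matrix and τ ≥ 0 with ‖I − τ𝒜‖₂ ≤ 1. Let U₀ ∈ ℝ^M, and for k = 0, 1, …, n define Ũ_k = 𝑴^{−1/2}(I + τ𝒜)^{−k} 𝑴^{1/2} U₀ and U*_k = 𝑴^{−1/2}(I − τ𝒜)^k 𝑴^{1/2} U₀; let Ũ and U* be the M×(n+1) matrices with these columns. Then ‖Ũ − U*‖_F² ≤ τ⁴ ‖𝒜‖₂⁴ (Σ_{k=1}^{n} k²) ‖𝑴^{−1/2}‖₂² ‖𝑴^{1/2}‖₂² ‖U₀‖₂². -/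

import Mathlib

open Matrix Finset

/-- The spectral norm (operator 2-norm) of a real square matrix. -/
noncomputable def spec {M : ℕ} (A : Matrix (Fin M) (Fin M) ℝ) : ℝ :=
  ‖LinearMap.toContinuousLinearMap (Matrix.toEuclideanLin A)‖

/-- The squared Frobenius norm of a real matrix. -/
noncomputable def frobSq {m l : ℕ} (A : Matrix (Fin m) (Fin l) ℝ) : ℝ :=
  ∑ i, ∑ j, (A i j) ^ 2

/-- The squared Euclidean norm of a real vector. -/
noncomputable def vecNormSq {M : ℕ} (x : Fin M → ℝ) : ℝ := ∑ i, (x i) ^ 2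

/-- The Euclidean norm of a real vector. -/
noncomputable def vecNorm {M : ℕ} (x : Fin M → ℝ) : ℝ := Real.sqrt (∑ i, (x i) ^ 2)

/-- The M×(n+1) matrix whose columns are the vectors `v 0, …, v n`. -/
noncomputable def colMat {M n : ℕ} (v : Fin (n + 1) → Fin M → ℝ) :
    Matrix (Fin M) (Fin (n + 1)) ℝ :=
  Matrix.of fun i k => v k i

lemma vecNormSq_nonneg {M : ℕ} (x : Fin M → ℝ) : 0 ≤ vecNormSq x :=
  Finset.sum_nonneg fun i _ => sq_nonneg _

lemma spec_nonneg {M : ℕ} (A : Matrix (Fin M) (Fin M) ℝ) : 0 ≤ spec A := norm_nonneg _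

lemma normSq_eq {M : ℕ} (x : Fin M → ℝ) :
    ‖(WithLp.equiv 2 (Fin M → ℝ)).symm x‖ ^ 2 = vecNormSq x := by
  rw [EuclideanSpace.norm_eq, Real.sq_sqrt (Finset.sum_nonneg fun i _ => sq_nonneg _)]
  simp [vecNormSq, sq_abs]

lemma mulVec_vecNormSq_le {M : ℕ} (A : Matrix (Fin M) (Fin M) ℝ) (x : Fin M → ℝ) :
    vecNormSq (A.mulVec x) ≤ spec A ^ 2 * vecNormSq x := by
  have h := (LinearMap.toContinuousLinearMap (Matrix.toEuclideanLin A)).le_opNorm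
      ((WithLp.equiv 2 (Fin M → ℝ)).symm x)
  rw [LinearMap.coe_toContinuousLinearMap'] at h
  have happ : Matrix.toEuclideanLin A ((WithLp.equiv 2 (Fin M → ℝ)).symm x)
      = (WithLp.equiv 2 (Fin M → ℝ)).symm (A.mulVec x) := rfl
  rw [happ] at h
  have h2 : ‖(WithLp.equiv 2 (Fin M → ℝ)).symm (A.mulVec x)‖ ^ 2
      ≤ (spec A * ‖(WithLp.equiv 2 (Fin M → ℝ)).symm x‖) ^ 2 := by
    apply pow_le_pow_left₀ (norm_nonneg _) h
  rw [normSq_eq, mul_pow, normSq_eq] at h2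
  exact h2

lemma spec_le_of_forall {M : ℕ} (A : Matrix (Fin M) (Fin M) ℝ) (c : ℝ) (hc : 0 ≤ c)
    (h : ∀ x : Fin M → ℝ, vecNormSq (A.mulVec x) ≤ c ^ 2 * vecNormSq x) : spec A ≤ c := by
  apply ContinuousLinearMap.opNorm_le_bound _ hc
  intro x
  rw [LinearMap.coe_toContinuousLinearMap']
  have happ : Matrix.toEuclideanLin A x
      = (WithLp.equiv 2 (Fin M → ℝ)).symm (A.mulVec (WithLp.equiv 2 (Fin M → ℝ) x)) := rfl
  rw [happ]
  have hx : x = (WithLp.equiv 2 (Fin M → ℝ)).symm (WithLp.equiv 2 (Fin M → ℝ) x) := rfl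
  have h2 := h (WithLp.equiv 2 (Fin M → ℝ) x)
  rw [← normSq_eq, ← normSq_eq, ← hx] at h2
  have := Real.sqrt_le_sqrt h2
  rwa [Real.sqrt_sq (norm_nonneg _), ← mul_pow, Real.sqrt_sq (by positivity)] at this

lemma spec_mul_le {M : ℕ} (A B : Matrix (Fin M) (Fin M) ℝ) :
    spec (A * B) ≤ spec A * spec B := by
  apply spec_le_of_forall _ _ (mul_nonneg (spec_nonneg A) (spec_nonneg B))
  intro x
  rw [← Matrix.mulVec_mulVec]
  calc vecNormSq (A.mulVec (B.mulVec x)) ≤ spec A ^ 2 * vecNormSq (B.mulVec x) :=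
        mulVec_vecNormSq_le A _
    _ ≤ spec A ^ 2 * (spec B ^ 2 * vecNormSq x) := by
        apply mul_le_mul_of_nonneg_left (mulVec_vecNormSq_le B x) (by positivity)
    _ = (spec A * spec B) ^ 2 * vecNormSq x := by ring

lemma spec_smul {M : ℕ} (c : ℝ) (A : Matrix (Fin M) (Fin M) ℝ) :
    spec (c • A) = |c| * spec A := by
  unfold spec
  rw [_root_.map_smul, _root_.map_smul]
  rw [← Real.norm_eq_abs]
  exact norm_smul c (LinearMap.toContinuousLinearMap (Matrix.toEuclideanLin A))

lemma spec_one_le {M : ℕ} : spec (1 : Matrix (Fin M) (Fin M) ℝ) ≤ 1 := by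
  apply spec_le_of_forall _ _ zero_le_one
  intro x; simp [Matrix.one_mulVec]

lemma spec_sub_le {M : ℕ} (A B : Matrix (Fin M) (Fin M) ℝ) :
    spec (A - B) ≤ spec A + spec B := by
  simp only [spec, map_sub]
  exact norm_sub_le _ _

lemma spec_add_le {M : ℕ} (A B : Matrix (Fin M) (Fin M) ℝ) :
    spec (A + B) ≤ spec A + spec B := by
  simp only [spec, map_add]
  exact norm_add_le _ _

lemma spec_pow_le_one {M : ℕ} (A : Matrix (Fin M) (Fin M) ℝ) (h : spec A ≤ 1) (k : ℕ) :
    spec (A ^ k) ≤ 1 := by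
  induction k with
  | zero => simpa using spec_one_le
  | succ k ih =>
      rw [pow_succ]
      calc spec (A ^ k * A) ≤ spec (A ^ k) * spec A := spec_mul_le _ _
        _ ≤ 1 * 1 := mul_le_mul ih h (spec_nonneg _) zero_le_one
        _ = 1 := by ring

section
variable {M : ℕ}

lemma smul_posSemidef (A : Matrix (Fin M) (Fin M) ℝ) (hA : A.PosSemidef) (τ : ℝ) (hτ : 0 ≤ τ) :
    (τ • A).PosSemidef := by
  rw [Matrix.posSemidef_iff_dotProduct_mulVec]
  constructor
  · show (τ • A)ᴴ = τ • A
    rw [Matrix.conjTranspose_smul, hA.1.eq, star_trivial]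
  · intro x
    rw [Matrix.smul_mulVec, dotProduct_smul, smul_eq_mul]
    exact mul_nonneg hτ (hA.dotProduct_mulVec_nonneg x)

lemma onePlus_posDef (A : Matrix (Fin M) (Fin M) ℝ) (hA : A.PosSemidef) (τ : ℝ) (hτ : 0 ≤ τ) :
    (1 + τ • A).PosDef :=
  Matrix.PosDef.add_posSemidef Matrix.PosDef.one (smul_posSemidef A hA τ hτ)

lemma onePlus_det_isUnit (A : Matrix (Fin M) (Fin M) ℝ) (hA : A.PosSemidef) (τ : ℝ) (hτ : 0 ≤ τ) :
    IsUnit (1 + τ • A).det :=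
  (onePlus_posDef A hA τ hτ).det_pos.ne'.isUnit

lemma spec_inv_le_one (A : Matrix (Fin M) (Fin M) ℝ) (hA : A.PosSemidef) (τ : ℝ) (hτ : 0 ≤ τ) :
    spec (1 + τ • A)⁻¹ ≤ 1 := by
  apply spec_le_of_forall _ _ zero_le_one
  intro x
  set y := (1 + τ • A)⁻¹.mulVec x with hy
  have hxy : x = (1 + τ • A).mulVec y := by
    rw [hy, Matrix.mulVec_mulVec, Matrix.mul_nonsing_inv _ (onePlus_det_isUnit A hA τ hτ),
      Matrix.one_mulVec]
  have hexp : vecNormSq x = vecNormSq y + (2*τ) * (y ⬝ᵥ (A.mulVec y))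
      + τ^2 * vecNormSq (A.mulVec y) := by
    rw [hxy, Matrix.add_mulVec, Matrix.one_mulVec, Matrix.smul_mulVec]
    have h : ∀ i, (y i + τ * (A.mulVec y) i)^2
        = y i^2 + (2*τ) * (y i * (A.mulVec y) i) + τ^2 * ((A.mulVec y) i)^2 := by
      intro i; ring
    simp_rw [vecNormSq, dotProduct, Pi.add_apply, Pi.smul_apply, smul_eq_mul, h,
      Finset.sum_add_distrib, Finset.mul_sum]
  have hd : 0 ≤ y ⬝ᵥ (A.mulVec y) := by
    have := hA.dotProduct_mulVec_nonneg y
    simpa using this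
  have h1 := vecNormSq_nonneg (A.mulVec y)
  rw [one_pow, one_mul]
  nlinarith [mul_nonneg hτ hd]

lemma key_bound (A : Matrix (Fin M) (Fin M) ℝ) (hA : A.PosSemidef) (τ : ℝ) (hτ : 0 ≤ τ)
    (h1 : spec (1 - τ • A) ≤ 1) (k : ℕ) :
    spec (((1 + τ • A)⁻¹) ^ k - (1 - τ • A) ^ k) ≤ k * τ^2 * spec A ^ 2 := by
  set X := (1 + τ • A)⁻¹ with hX
  set Y := 1 - τ • A with hY
  have e1 : (τ • A) * (τ • A) = τ^2 • (A*A) := by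
    rw [smul_mul_assoc, mul_smul_comm, smul_smul, ← pow_two]
  have hmul : (1 + τ • A) * Y = 1 - τ^2 • (A * A) := by
    rw [hY, mul_sub, mul_one, add_mul, one_mul, e1]
    abel
  have hXB : X * (1 + τ • A) = 1 := Matrix.nonsing_inv_mul _ (onePlus_det_isUnit A hA τ hτ)
  have hXY : X - Y = X * (τ^2 • (A * A)) := by
    have h2 : Y = X * (1 - τ^2 • (A * A)) := by
      rw [← hmul, ← mul_assoc, hXB, one_mul]
    rw [h2, mul_sub, mul_one, sub_sub_cancel]
  have hAA : 0 ≤ τ^2 * spec (A*A) :=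
    mul_nonneg (sq_nonneg τ) (spec_nonneg _)
  have hspecXY : spec (X - Y) ≤ τ^2 * spec A ^ 2 := by
    calc spec (X - Y) = spec (X * (τ^2 • (A*A))) := by rw [hXY]
      _ ≤ spec X * spec (τ^2 • (A*A)) := spec_mul_le _ _
      _ ≤ 1 * (τ^2 * spec (A*A)) := by
          rw [spec_smul, abs_of_nonneg (sq_nonneg τ)]
          exact mul_le_mul_of_nonneg_right (spec_inv_le_one A hA τ hτ) hAA
      _ ≤ 1 * (τ^2 * (spec A * spec A)) := by
          apply mul_le_mul_of_nonneg_left _ zero_le_one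
          exact mul_le_mul_of_nonneg_left (spec_mul_le A A) (sq_nonneg τ)
      _ = τ^2 * spec A ^ 2 := by ring
  induction k with
  | zero =>
      rw [pow_zero, pow_zero, sub_self]
      unfold spec
      rw [map_zero, map_zero, norm_zero]
      positivity
  | succ k ih =>
      have hid : X ^ (k+1) - Y ^ (k+1) = X * (X ^ k - Y ^ k) + (X - Y) * Y ^ k := by
        rw [mul_sub, sub_mul, pow_succ', pow_succ']
        abel
      rw [hid]
      have h2 : spec (X * (X ^ k - Y ^ k)) ≤ k * τ^2 * spec A ^ 2 := by
        calc spec (X * (X ^ k - Y ^ k)) ≤ spec X * spec (X ^ k - Y ^ k) := spec_mul_le _ _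
          _ ≤ 1 * (k * τ^2 * spec A ^ 2) :=
              mul_le_mul (spec_inv_le_one A hA τ hτ) ih (spec_nonneg _) zero_le_one
          _ = k * τ^2 * spec A ^ 2 := one_mul _
      have h3 : spec ((X - Y) * Y ^ k) ≤ τ^2 * spec A ^ 2 := by
        calc spec ((X - Y) * Y ^ k) ≤ spec (X - Y) * spec (Y ^ k) := spec_mul_le _ _
          _ ≤ (τ^2 * spec A ^ 2) * 1 :=
              mul_le_mul hspecXY (spec_pow_le_one Y h1 k) (spec_nonneg _)
                (mul_nonneg (sq_nonneg τ) (pow_nonneg (spec_nonneg A) 2))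
          _ = τ^2 * spec A ^ 2 := mul_one _
      calc spec (X * (X ^ k - Y ^ k) + (X - Y) * Y ^ k)
          ≤ spec (X * (X ^ k - Y ^ k)) + spec ((X - Y) * Y ^ k) := spec_add_le _ _
        _ ≤ k * τ^2 * spec A ^ 2 + τ^2 * spec A ^ 2 := add_le_add h2 h3
        _ = (k+1 : ℕ) * τ^2 * spec A ^ 2 := by push_cast; ring
end

/-- Frobenius bound for the difference `Ũ - U*`, where
`Ũ_k = 𝑴^{-1/2}(I + τ𝒜)^{-k} 𝑴^{1/2} U₀` and `U*_k = 𝑴^{-1/2}(I - τ𝒜)^k 𝑴^{1/2} U₀`: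
`‖Ũ - U*‖_F² ≤ τ⁴ ‖𝒜‖₂⁴ (∑_{k=1}^n k²) ‖𝑴^{-1/2}‖₂² ‖𝑴^{1/2}‖₂² ‖U₀‖₂²`. -/
theorem frob_bound_Utilde_sub_Ustar {M n : ℕ} (Mmat Msq A : Matrix (Fin M) (Fin M) ℝ)
    (hM : Mmat.PosDef) (hMsq : Msq.PosDef) (hsq : Msq * Msq = Mmat)
    (hA : A.PosSemidef) (τ : ℝ) (hτ : 0 ≤ τ) (h1 : spec (1 - τ • A) ≤ 1)
    (U₀ : Fin M → ℝ) :
    frobSq ((colMat fun k : Fin (n + 1) =>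
          (Msq⁻¹ * ((1 + τ • A)⁻¹) ^ (k : ℕ) * Msq).mulVec U₀) -
        colMat fun k : Fin (n + 1) =>
          (Msq⁻¹ * (1 - τ • A) ^ (k : ℕ) * Msq).mulVec U₀) ≤
      τ ^ 4 * spec A ^ 4 * (∑ k ∈ Finset.Icc 1 n, (k : ℝ) ^ 2) *
        spec Msq⁻¹ ^ 2 * spec Msq ^ 2 * vecNormSq U₀ := by
  set X := (1 + τ • A)⁻¹ with hX
  set Y := 1 - τ • A with hY
  set C : ℝ := τ ^ 4 * spec A ^ 4 * spec Msq⁻¹ ^ 2 * spec Msq ^ 2 * vecNormSq U₀ with hC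
  set v : Fin (n+1) → Fin M → ℝ :=
    fun k => (Msq⁻¹ * X ^ (k : ℕ) * Msq).mulVec U₀ with hv
  set w : Fin (n+1) → Fin M → ℝ :=
    fun k => (Msq⁻¹ * Y ^ (k : ℕ) * Msq).mulVec U₀ with hw
  have hfr : frobSq (colMat v - colMat w)
      = ∑ k : Fin (n+1), vecNormSq (fun i => v k i - w k i) := by
    unfold frobSq colMat vecNormSq
    rw [Finset.sum_comm]
    simp [Matrix.sub_apply]
  have hterm : ∀ k : Fin (n+1),
      vecNormSq (fun i => v k i - w k i) ≤ ((k : ℕ) : ℝ) ^ 2 * C := by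
    intro k
    have hcol : (fun i => v k i - w k i)
        = (Msq⁻¹ * ((X ^ (k : ℕ) - Y ^ (k : ℕ)) * Msq)).mulVec U₀ := by
      funext i
      have hD : Msq⁻¹ * ((X ^ (k : ℕ) - Y ^ (k : ℕ)) * Msq)
          = Msq⁻¹ * X ^ (k : ℕ) * Msq - Msq⁻¹ * Y ^ (k : ℕ) * Msq := by
        rw [sub_mul, mul_sub, ← mul_assoc, ← mul_assoc]
      rw [hD, Matrix.sub_mulVec, Pi.sub_apply]
    have hkey := key_bound A hA τ hτ h1 (k : ℕ)
    have hspecD : spec (Msq⁻¹ * ((X ^ (k : ℕ) - Y ^ (k : ℕ)) * Msq))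
        ≤ spec Msq⁻¹ * ((((k:ℕ):ℝ) * τ^2 * spec A ^ 2) * spec Msq) := by
      calc spec (Msq⁻¹ * ((X ^ (k : ℕ) - Y ^ (k : ℕ)) * Msq))
          ≤ spec Msq⁻¹ * spec ((X ^ (k : ℕ) - Y ^ (k : ℕ)) * Msq) := spec_mul_le _ _
        _ ≤ spec Msq⁻¹ * ((((k:ℕ):ℝ) * τ^2 * spec A ^ 2) * spec Msq) := by
            apply mul_le_mul_of_nonneg_left _ (spec_nonneg _)
            calc spec ((X ^ (k : ℕ) - Y ^ (k : ℕ)) * Msq)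
                ≤ spec (X ^ (k : ℕ) - Y ^ (k : ℕ)) * spec Msq := spec_mul_le _ _
              _ ≤ (((k:ℕ):ℝ) * τ^2 * spec A ^ 2) * spec Msq :=
                  mul_le_mul_of_nonneg_right hkey (spec_nonneg _)
    rw [hcol]
    calc vecNormSq ((Msq⁻¹ * ((X ^ (k : ℕ) - Y ^ (k : ℕ)) * Msq)).mulVec U₀)
        ≤ spec (Msq⁻¹ * ((X ^ (k : ℕ) - Y ^ (k : ℕ)) * Msq)) ^ 2 * vecNormSq U₀ :=
          mulVec_vecNormSq_le _ _
      _ ≤ (spec Msq⁻¹ * ((((k:ℕ):ℝ) * τ^2 * spec A ^ 2) * spec Msq)) ^ 2 * vecNormSq U₀ := by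
          apply mul_le_mul_of_nonneg_right _ (vecNormSq_nonneg U₀)
          exact pow_le_pow_left₀ (spec_nonneg _) hspecD 2
      _ = ((k : ℕ) : ℝ) ^ 2 * C := by rw [hC]; ring
  have hsum : ∑ k : Fin (n+1), (((k : ℕ) : ℝ)) ^ 2 = ∑ k ∈ Finset.Icc 1 n, (k : ℝ) ^ 2 := by
    rw [Fin.sum_univ_eq_sum_range (fun k => ((k : ℝ)) ^ 2) (n+1)]
    rw [Finset.range_eq_Ico, ← Finset.Ico_add_one_right_eq_Icc]
    have hins : Finset.Ico 0 (n+1) = insert 0 (Finset.Ico 1 (n+1)) := by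
      ext a
      simp only [Finset.mem_Ico, Finset.mem_insert]
      omega
    rw [hins, Finset.sum_insert (by simp)]
    simp
  calc frobSq (colMat v - colMat w)
      = ∑ k : Fin (n+1), vecNormSq (fun i => v k i - w k i) := hfr
    _ ≤ ∑ k : Fin (n+1), ((k : ℕ) : ℝ) ^ 2 * C :=
        Finset.sum_le_sum fun k _ => hterm k
    _ = (∑ k : Fin (n+1), ((k : ℕ) : ℝ) ^ 2) * C := by rw [Finset.sum_mul]
    _ = (∑ k ∈ Finset.Icc 1 n, (k : ℝ) ^ 2) * C := by rw [hsum]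
    _ = τ ^ 4 * spec A ^ 4 * (∑ k ∈ Finset.Icc 1 n, (k : ℝ) ^ 2) *
        spec Msq⁻¹ ^ 2 * spec Msq ^ 2 * vecNormSq U₀ := by rw [hC]; ring
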